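/- arXiv:1511.08742 — 5 statements merged into one kernel-verified Lean document; each statement's English description precedes it below -/
import Mathlib

section
/- For every u ≥ 0 and every nonnegative integer i, ∫_u^∞ [(i+1)(z−u)^i − (z−u)^{i+2}] ψ(z) dz ≥ 0, where ψ is the standard Gaussian density. -/
open MeasureTheory Real Filter

noncomputable def gaussPsi (x : ℝ) : ℝ := Real.exp (-x^2/2) / Real.sqrt (2 * Real.pi)

lemma gaussPsi_nonneg (x : ℝ) : 0 ≤ gaussPsi x :=
  div_nonneg (Real.exp_pos _).le (Real.sqrt_nonneg _)

lemma hasDerivAt_gaussPsi (z : ℝ) :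
    HasDerivAt gaussPsi (-z * gaussPsi z) z := by
  have h1 : HasDerivAt (fun z : ℝ => -z^2/2) (-z) z := by
    have h := ((hasDerivAt_pow 2 z).neg).div_const 2
    refine h.congr_deriv ?_
    ring
  have h2 := (h1.exp).div_const (Real.sqrt (2 * Real.pi))
  refine h2.congr_deriv ?_
  unfold gaussPsi
  ring

lemma intOn_pow_gauss (u : ℝ) (hu : 0 ≤ u) (k : ℕ) :
    IntegrableOn (fun z : ℝ => z ^ k * Real.exp (-z^2/2)) (Set.Ioi u) := by
  have h := integrableOn_rpow_mul_exp_neg_mul_sq (b := 1/2) (by norm_num) (s := k)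
      (by have : (0:ℝ) ≤ k := Nat.cast_nonneg k; linarith)
  have h' : IntegrableOn (fun x : ℝ => x ^ (k:ℝ) * Real.exp (-(1/2) * x ^ 2)) (Set.Ioi u) :=
    h.mono_set (Set.Ioi_subset_Ioi hu)
  refine h'.congr_fun (fun x hx => ?_) measurableSet_Ioi
  simp only [Real.rpow_natCast]
  ring_nf

lemma continuous_gaussPsi : Continuous gaussPsi := by
  unfold gaussPsi
  exact (Real.continuous_exp.comp (by continuity)).div_const _

lemma intOn_shift_pow_gauss (u : ℝ) (hu : 0 ≤ u) (k : ℕ) :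
    IntegrableOn (fun z : ℝ => (z - u) ^ k * gaussPsi z) (Set.Ioi u) := by
  refine Integrable.mono' ((intOn_pow_gauss u hu k).div_const (Real.sqrt (2 * Real.pi)))
    ?_ ?_
  · exact (Continuous.aestronglyMeasurable
      (((continuous_id.sub continuous_const).pow k).mul continuous_gaussPsi)).restrict
  · filter_upwards [ae_restrict_mem measurableSet_Ioi] with z hz
    have hz' : u < z := hz
    have h0 : (0:ℝ) ≤ z - u := by linarith
    have h1 : z - u ≤ z := by linarith
    rw [Real.norm_eq_abs, abs_of_nonneg (mul_nonneg (pow_nonneg h0 _) (gaussPsi_nonneg z))]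
    unfold gaussPsi
    rw [mul_div_assoc]
    gcongr

lemma intOn_mul_shift_pow_gauss (u : ℝ) (hu : 0 ≤ u) (k : ℕ) :
    IntegrableOn (fun z : ℝ => z * ((z - u) ^ k * gaussPsi z)) (Set.Ioi u) := by
  refine Integrable.mono' ((intOn_pow_gauss u hu (k+1)).div_const (Real.sqrt (2 * Real.pi)))
    ?_ ?_
  · exact (Continuous.aestronglyMeasurable
      (continuous_id.mul (((continuous_id.sub continuous_const).pow k).mul
        continuous_gaussPsi))).restrict
  · filter_upwards [ae_restrict_mem measurableSet_Ioi] with z hz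
    have hz' : u < z := hz
    have h0 : (0:ℝ) ≤ z - u := by linarith
    have h1 : z - u ≤ z := by linarith
    have hzpos : (0:ℝ) ≤ z := le_trans hu hz'.le
    rw [Real.norm_eq_abs, abs_of_nonneg
      (mul_nonneg hzpos (mul_nonneg (pow_nonneg h0 _) (gaussPsi_nonneg z)))]
    unfold gaussPsi
    have : z ^ (k+1) * Real.exp (-z^2/2) / Real.sqrt (2 * Real.pi)
        = z * (z ^ k * (Real.exp (-z^2/2) / Real.sqrt (2 * Real.pi))) := by
      rw [pow_succ]; ring
    rw [this]
    gcongr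

lemma tendsto_shift_pow_gauss (u : ℝ) (hu : 0 ≤ u) (n : ℕ) :
    Tendsto (fun z : ℝ => (z - u) ^ n * gaussPsi z) atTop (nhds 0) := by
  have key : Tendsto (fun z : ℝ => (z - u) ^ n * Real.exp (-z^2/2)) atTop (nhds 0) := by
    apply squeeze_zero' (g := fun z : ℝ => z ^ n * Real.exp (-z))
    · filter_upwards [eventually_ge_atTop u] with z hz
      have h0 : (0:ℝ) ≤ z - u := by linarith
      positivity
    · filter_upwards [eventually_ge_atTop (max u 2)] with z hz
      have h2 : (2:ℝ) ≤ z := le_trans (le_max_right _ _) hz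
      have hzu : u ≤ z := le_trans (le_max_left _ _) hz
      have h0 : (0:ℝ) ≤ z - u := by linarith
      have h1 : z - u ≤ z := by linarith
      have he : Real.exp (-z^2/2) ≤ Real.exp (-z) := by
        apply Real.exp_le_exp.mpr; nlinarith
      exact mul_le_mul (pow_le_pow_left₀ h0 h1 n) he (Real.exp_pos _).le
        (pow_nonneg (by linarith) n)
    · exact tendsto_pow_mul_exp_neg_atTop_nhds_zero n
  have := key.div_const (Real.sqrt (2 * Real.pi))
  simpa [gaussPsi, mul_div_assoc] using this

theorem integral_moment_diff_nonneg (u : ℝ) (hu : 0 ≤ u) (i : ℕ) :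
    0 ≤ ∫ z in Set.Ioi u, ((i + 1 : ℝ) * (z - u)^i - (z - u)^(i + 2)) * gaussPsi z := by
  set ψ := gaussPsi
  -- integrability facts
  have hI1 : IntegrableOn (fun z : ℝ => (i + 1 : ℝ) * ((z - u) ^ i * ψ z)) (Set.Ioi u) :=
    (intOn_shift_pow_gauss u hu i).const_mul _
  have hI2 : IntegrableOn (fun z : ℝ => (z - u) ^ (i+2) * ψ z) (Set.Ioi u) :=
    intOn_shift_pow_gauss u hu (i+2)
  have hI3 : IntegrableOn (fun z : ℝ => z * ((z - u) ^ (i+1) * ψ z)) (Set.Ioi u) :=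
    intOn_mul_shift_pow_gauss u hu (i+1)
  -- integration by parts identity
  have hparts : ∫ z in Set.Ioi u,
      (z * ((z - u) ^ (i+1) * ψ z) - (i + 1 : ℝ) * ((z - u) ^ i * ψ z)) = 0 := by
    have hderiv : ∀ z ∈ Set.Ioi u,
        HasDerivAt (fun z : ℝ => -((z - u) ^ (i+1) * ψ z))
          (z * ((z - u) ^ (i+1) * ψ z) - (i + 1 : ℝ) * ((z - u) ^ i * ψ z)) z := by
      intro z _
      have hp : HasDerivAt (fun z : ℝ => (z - u) ^ (i+1))
          ((i + 1 : ℝ) * (z - u) ^ i) z := by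
        have := ((hasDerivAt_id z).sub_const u).pow (i+1)
        simpa [Pi.pow_def] using this
      have := (hp.mul (hasDerivAt_gaussPsi z)).neg
      refine this.congr_deriv ?_
      ring
    have hcont : ContinuousWithinAt (fun z : ℝ => -((z - u) ^ (i+1) * ψ z))
        (Set.Ici u) u := by
      apply Continuous.continuousWithinAt
      exact (((continuous_id.sub continuous_const).pow (i+1)).mul continuous_gaussPsi).neg
    have htend : Tendsto (fun z : ℝ => -((z - u) ^ (i+1) * ψ z)) atTop (nhds 0) := by
      simpa using (tendsto_shift_pow_gauss u hu (i+1)).neg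
    have := integral_Ioi_of_hasDerivAt_of_tendsto hcont hderiv (hI3.sub hI1) htend
    simpa using this
  have hkey : ∫ z in Set.Ioi u, (i + 1 : ℝ) * ((z - u) ^ i * ψ z)
      = ∫ z in Set.Ioi u, z * ((z - u) ^ (i+1) * ψ z) := by
    have := integral_sub hI3 hI1
    rw [hparts] at this
    linarith [this]
  have heq : ∫ z in Set.Ioi u, ((i + 1 : ℝ) * (z - u)^i - (z - u)^(i + 2)) * ψ z
      = ∫ z in Set.Ioi u, (z * ((z - u) ^ (i+1) * ψ z) - (z - u) ^ (i+2) * ψ z) := by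
    rw [integral_sub hI3 hI2, ← hkey, ← integral_sub hI1 hI2]
    apply setIntegral_congr_fun measurableSet_Ioi
    intro z _
    ring
  rw [heq]
  apply setIntegral_nonneg measurableSet_Ioi
  intro z hz
  have hz' : u < z := hz
  have h0 : (0:ℝ) ≤ z - u := by linarith
  have hψ : 0 ≤ ψ z := gaussPsi_nonneg z
  have : z * ((z - u) ^ (i+1) * ψ z) - (z - u) ^ (i+2) * ψ z
      = u * ((z - u) ^ (i+1) * ψ z) := by
    rw [pow_succ]; ring
  rw [this]
  positivity
end

section
/- For 0 ≤ u ≤ A, the expression u(A−u)[ψ(u) − u Q(u)] + (A+u) Q(u) is positive, where ψ is the standard Gaussian density and Q its tail function. -/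
open MeasureTheory Real

noncomputable def gaussQ (x : ℝ) : ℝ := ∫ z in Set.Ioi x, gaussPsi z

lemma gaussPsi_pos (x : ℝ) : 0 < gaussPsi x :=
  div_pos (Real.exp_pos _) (Real.sqrt_pos.2 (by positivity))

lemma integrable_gaussPsi : Integrable gaussPsi := by
  have h := (integrable_exp_neg_mul_sq (by norm_num : (0:ℝ) < 1/2)).div_const
    (Real.sqrt (2 * Real.pi))
  refine h.congr (Filter.Eventually.of_forall fun x => ?_)
  simp only [gaussPsi]
  ring_nf

lemma gaussQ_pos (x : ℝ) : 0 < gaussQ x := by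
  rw [gaussQ]
  apply setIntegral_pos_iff_support_of_nonneg_ae (Filter.Eventually.of_forall
    fun z => (gaussPsi_pos z).le) integrable_gaussPsi.integrableOn |>.2
  have : Function.support gaussPsi = Set.univ := by
    ext z; simp [Function.mem_support, (gaussPsi_pos z).ne']
  rw [this, Set.univ_inter]
  simp [Real.volume_Ioi]

lemma gaussPsi_hasDeriv (x : ℝ) : HasDerivAt (fun y => -gaussPsi y) (x * gaussPsi x) x := by
  have h1 : HasDerivAt (fun y : ℝ => -y^2/2) (-x) x := by
    have := ((hasDerivAt_pow 2 x).neg.div_const 2)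
    exact this.congr_deriv (by norm_num; ring)
  have h2 := (h1.exp.div_const (Real.sqrt (2 * Real.pi))).neg
  simp only [gaussPsi]
  exact h2.congr_deriv (by ring)

lemma gaussPsi_tendsto : Filter.Tendsto (fun x => -gaussPsi x) Filter.atTop (nhds 0) := by
  have h : Filter.Tendsto (fun x : ℝ => -x^2/2) Filter.atTop Filter.atBot := by
    apply Filter.Tendsto.atBot_div_const (by norm_num)
    have : Filter.Tendsto (fun x : ℝ => x^2) Filter.atTop Filter.atTop :=
      Filter.tendsto_pow_atTop (by norm_num)
    exact Filter.tendsto_neg_atBot_iff.mpr this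
  have := (Real.tendsto_exp_atBot.comp h).div_const (Real.sqrt (2 * Real.pi))
  simpa [gaussPsi] using this.neg

lemma integral_z_gaussPsi (u : ℝ) : ∫ z in Set.Ioi u, z * gaussPsi z = gaussPsi u := by
  have := integral_Ioi_of_hasDerivAt_of_tendsto' (f := fun y => -gaussPsi y)
    (f' := fun z => z * gaussPsi z) (a := u)
    (fun x _ => gaussPsi_hasDeriv x) ?_ gaussPsi_tendsto
  · rw [this]; ring
  · have h : Integrable (fun z : ℝ => z * Real.exp (-(1/2) * z^2)) :=
      integrable_mul_exp_neg_mul_sq (by norm_num)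
    refine (h.div_const (Real.sqrt (2 * Real.pi))).integrableOn.congr_fun
      (fun z _ => ?_) measurableSet_Ioi
    simp only [gaussPsi]; ring_nf

lemma uQ_le_psi (u : ℝ) (hu : 0 ≤ u) : u * gaussQ u ≤ gaussPsi u := by
  rw [← integral_z_gaussPsi u, gaussQ, ← integral_const_mul]
  apply setIntegral_mono_on
  · exact (integrable_gaussPsi.integrableOn.const_mul u)
  · have h : Integrable (fun z : ℝ => z * Real.exp (-(1/2) * z^2)) :=
      integrable_mul_exp_neg_mul_sq (by norm_num)
    refine (h.div_const (Real.sqrt (2 * Real.pi))).integrableOn.congr_fun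
      (fun z _ => ?_) measurableSet_Ioi
    simp only [gaussPsi]; ring_nf
  · exact measurableSet_Ioi
  · intro z hz
    exact mul_le_mul_of_nonneg_right (le_of_lt hz) (gaussPsi_pos z).le

theorem expr_pos_low (A u : ℝ) (hA : 0 < A) (hu0 : 0 ≤ u) (huA : u ≤ A) :
    0 < u * (A - u) * (gaussPsi u - u * gaussQ u) + (A + u) * gaussQ u := by
  have h1 : 0 ≤ u * (A - u) * (gaussPsi u - u * gaussQ u) := by
    apply mul_nonneg (mul_nonneg hu0 (by linarith))
    linarith [uQ_le_psi u hu0]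
  have h2 : 0 < (A + u) * gaussQ u := mul_pos (by linarith) (gaussQ_pos u)
  linarith
end

section
/- For every A > 0 and every x with 0 ≤ x ≤ A, the function g̃(x, A) = ∫_A^∞ e^{-(z²+x²)/2} I₀(z x) [1 − (z−A)²/2] z dz is positive, where I₀ is the modified Bessel function of the first kind of order 0. -/
open MeasureTheory Real intervalIntegral

noncomputable def besselI0 (x : ℝ) : ℝ := (1 / Real.pi) * ∫ φ in (0:ℝ)..Real.pi, Real.exp (x * Real.cos φ)

open Filter Set


lemma integrable_pow_gauss (n : ℕ) :
    Integrable (fun w : ℝ => w ^ n * Real.exp (-w ^ 2 / 2)) := by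
  have h := integrable_rpow_mul_exp_neg_mul_sq (b := (1/2 : ℝ)) (by norm_num)
    (s := (n : ℝ)) (lt_of_lt_of_le (by norm_num) (Nat.cast_nonneg n))
  have e : ∀ x : ℝ, -(1/2 : ℝ) * x ^ 2 = -x ^ 2 / 2 := fun x => by ring
  simpa only [Real.rpow_natCast, e] using h

lemma tendsto_pow_gauss (n : ℕ) :
    Tendsto (fun w : ℝ => w ^ n * Real.exp (-w ^ 2 / 2)) atTop (nhds 0) := by
  have h := rpow_mul_exp_neg_mul_sq_isLittleO_exp_neg (b := (1/2:ℝ)) (by norm_num) (n : ℝ)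
  have e : ∀ x : ℝ, -(1/2 : ℝ) * x ^ 2 = -x ^ 2 / 2 := fun x => by ring
  simp only [Real.rpow_natCast, e] at h
  have hm : Tendsto (fun y : ℝ => (1/2 : ℝ) * y) atTop atTop :=
    Tendsto.const_mul_atTop (by norm_num) tendsto_id
  have h2 := Real.tendsto_exp_neg_atTop_nhds_zero.comp hm
  exact h.isBigO.trans_tendsto (h2.congr fun y => by
    simp only [Function.comp_apply]; congr 1; ring)

lemma integrable_cubic_gauss (c b₀ b₁ b₂ b₃ : ℝ) :
    Integrable (fun z : ℝ => (b₀ + b₁*z + b₂*z^2 + b₃*z^3) * Real.exp (-(z - c) ^ 2 / 2)) := by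
  have h0 := (integrable_pow_gauss 0).const_mul (b₀ + b₁*c + b₂*c^2 + b₃*c^3)
  have h1 := (integrable_pow_gauss 1).const_mul (b₁ + 2*b₂*c + 3*b₃*c^2)
  have h2 := (integrable_pow_gauss 2).const_mul (b₂ + 3*b₃*c)
  have h3 := (integrable_pow_gauss 3).const_mul b₃
  have H := (((h0.add h1).add h2).add h3).comp_sub_right c
  refine H.congr (Filter.Eventually.of_forall fun z => ?_)
  simp only [Pi.add_apply]
  ring

lemma tendsto_cubic_gauss (c b₀ b₁ b₂ b₃ : ℝ) :
    Tendsto (fun z : ℝ => (b₀ + b₁*z + b₂*z^2 + b₃*z^3) * Real.exp (-(z - c) ^ 2 / 2))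
      atTop (nhds 0) := by
  have h0 := (tendsto_pow_gauss 0).const_mul (b₀ + b₁*c + b₂*c^2 + b₃*c^3)
  have h1 := (tendsto_pow_gauss 1).const_mul (b₁ + 2*b₂*c + 3*b₃*c^2)
  have h2 := (tendsto_pow_gauss 2).const_mul (b₂ + 3*b₃*c)
  have h3 := (tendsto_pow_gauss 3).const_mul b₃
  have hb := (((h0.add h1).add h2).add h3)
  rw [show (b₀ + b₁*c + b₂*c^2 + b₃*c^3) * 0 + (b₁ + 2*b₂*c + 3*b₃*c^2) * 0
      + (b₂ + 3*b₃*c) * 0 + b₃ * 0 = (0:ℝ) by ring] at hb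
  have hsub : Tendsto (fun z : ℝ => z - c) atTop atTop := by
    simpa [sub_eq_add_neg] using tendsto_atTop_add_const_right atTop (-c) (tendsto_id (α := ℝ))
  have H := hb.comp hsub
  refine H.congr fun z => ?_
  simp only [Function.comp_apply, Pi.add_apply]
  ring




lemma key_gauss_pos (A c : ℝ) (hA : 0 < A) (hc : c ≤ A) :
    0 < ∫ z in Set.Ioi A, Real.exp (-(z - c) ^ 2 / 2) * ((1 - (z - A) ^ 2 / 2) * z) := by
  have hflip : ∀ z : ℝ, Real.exp (-(z - c) ^ 2 / 2) * ((1 - (z - A) ^ 2 / 2) * z)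
      = ((1 - (z - A) ^ 2 / 2) * z) * Real.exp (-(z - c) ^ 2 / 2) := fun z => mul_comm _ _
  simp only [hflip]
  set t : ℝ := max 0 (c/2) with ht
  have ht0 : 0 ≤ t := le_max_left _ _
  have htc : c/2 ≤ t := le_max_right _ _
  have htA : t ≤ A/2 := max_le (by linarith) (by linarith)
  have hα : 0 ≤ t - c/2 := by linarith
  have hs : 0 ≤ t * (A - c) := mul_nonneg ht0 (by linarith)
  have hv : 0 < A - t := by linarith
  -- r z := (t - c/2)*(z-A)^2 + (t*(A-c))*(z-A) + (A - t)
  have hIr : Integrable (fun z : ℝ =>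
      ((t - c/2)*(z-A)^2 + (t*(A-c))*(z-A) + (A - t)) * Real.exp (-(z - c) ^ 2 / 2)) :=
    (integrable_cubic_gauss c ((t-c/2)*A^2 - (t*(A-c))*A + (A-t))
      ((t*(A-c)) - 2*(t-c/2)*A) (t-c/2) 0).congr
      (Filter.Eventually.of_forall fun z => by ring_nf)
  have hIg : Integrable (fun z : ℝ =>
      ((1 - (z - A) ^ 2 / 2) * z) * Real.exp (-(z - c) ^ 2 / 2)) :=
    (integrable_cubic_gauss c 0 (1 - A^2/2) A (-(1/2))).congr
      (Filter.Eventually.of_forall fun z => by ring_nf)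
  have hderiv : ∀ z : ℝ, HasDerivAt
      (fun z : ℝ => (z^2/2 - (A - t)*z - ((A-t)*c - A^2/2 - t*(A-c) + 2*(t - c/2)*A))
        * Real.exp (-(z - c) ^ 2 / 2))
      ((((1 - (z - A) ^ 2 / 2) * z)
        - ((t - c/2)*(z-A)^2 + (t*(A-c))*(z-A) + (A - t))) * Real.exp (-(z - c) ^ 2 / 2)) z := by
    intro z
    have h1 : HasDerivAt (fun z : ℝ => -(z - c) ^ 2 / 2) (-(z - c)) z := by
      have := (((hasDerivAt_id z).sub_const c).pow 2).neg.div_const 2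
      exact this.congr_deriv (by simp; ring)
    have he := h1.exp
    have hp : HasDerivAt
        (fun z : ℝ => z^2/2 - (A - t)*z - ((A-t)*c - A^2/2 - t*(A-c) + 2*(t - c/2)*A))
        (z - (A - t)) z := by
      have := (((hasDerivAt_pow 2 z).div_const 2).sub ((hasDerivAt_id z).const_mul (A-t))).sub_const
        ((A-t)*c - A^2/2 - t*(A-c) + 2*(t - c/2)*A)
      exact this.congr_deriv (by simp)
    have H := hp.mul he
    exact H.congr_deriv (by ring)
  have hTend : Tendsto
      (fun z : ℝ => (z^2/2 - (A - t)*z - ((A-t)*c - A^2/2 - t*(A-c) + 2*(t - c/2)*A))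
        * Real.exp (-(z - c) ^ 2 / 2)) atTop (nhds 0) := by
    refine (tendsto_cubic_gauss c (-((A-t)*c - A^2/2 - t*(A-c) + 2*(t - c/2)*A))
      (-(A - t)) (1/2) 0).congr fun z => by ring_nf
  have hIgr : IntegrableOn (fun z : ℝ =>
      ((((1 - (z - A) ^ 2 / 2) * z)
        - ((t - c/2)*(z-A)^2 + (t*(A-c))*(z-A) + (A - t))) * Real.exp (-(z - c) ^ 2 / 2)))
      (Set.Ioi A) :=
    ((hIg.sub hIr).congr (Filter.Eventually.of_forall fun z => by
      simp only [Pi.sub_apply]; ring)).integrableOn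
  have hFTC := integral_Ioi_of_hasDerivAt_of_tendsto' (fun z _ => hderiv z) hIgr hTend
  have hzero : (A^2/2 - (A - t)*A - ((A-t)*c - A^2/2 - t*(A-c) + 2*(t - c/2)*A)) = 0 := by ring
  rw [hzero, zero_mul, zero_sub, neg_zero] at hFTC
  have hsplit : (∫ z in Set.Ioi A,
      ((((1 - (z - A) ^ 2 / 2) * z)
        - ((t - c/2)*(z-A)^2 + (t*(A-c))*(z-A) + (A - t))) * Real.exp (-(z - c) ^ 2 / 2)))
      = (∫ z in Set.Ioi A, ((1 - (z - A) ^ 2 / 2) * z) * Real.exp (-(z - c) ^ 2 / 2))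
        - ∫ z in Set.Ioi A,
            ((t - c/2)*(z-A)^2 + (t*(A-c))*(z-A) + (A - t)) * Real.exp (-(z - c) ^ 2 / 2) := by
    rw [← integral_sub hIg.integrableOn hIr.integrableOn]
    exact integral_congr_ae (Filter.Eventually.of_forall fun z => by ring)
  have heq : (∫ z in Set.Ioi A, ((1 - (z - A) ^ 2 / 2) * z) * Real.exp (-(z - c) ^ 2 / 2))
      = ∫ z in Set.Ioi A,
          ((t - c/2)*(z-A)^2 + (t*(A-c))*(z-A) + (A - t)) * Real.exp (-(z - c) ^ 2 / 2) := by
    have := hsplit.symm.trans hFTC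
    linarith
  rw [heq]
  rw [setIntegral_pos_iff_support_of_nonneg_ae ?_ hIr.integrableOn]
  · have hsub : Set.Ioi A ⊆ (Function.support fun z =>
        ((t - c/2)*(z-A)^2 + (t*(A-c))*(z-A) + (A - t)) * Real.exp (-(z - c) ^ 2 / 2)) ∩ Set.Ioi A := by
      intro z hz
      refine ⟨?_, hz⟩
      have hz' : A < z := hz
      have : 0 < ((t - c/2)*(z-A)^2 + (t*(A-c))*(z-A) + (A - t)) * Real.exp (-(z - c) ^ 2 / 2) := by
        have h1 : 0 ≤ (t - c/2)*(z-A)^2 := mul_nonneg hα (sq_nonneg _)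
        have h2 : 0 ≤ (t*(A-c))*(z-A) := mul_nonneg hs (by linarith)
        have := Real.exp_pos (-(z - c) ^ 2 / 2)
        nlinarith
      exact Function.mem_support.2 this.ne'
    calc (0:ENNReal) < volume (Set.Ioi A) := by rw [Real.volume_Ioi]; exact ENNReal.zero_lt_top
      _ ≤ _ := measure_mono hsub
  · filter_upwards [ae_restrict_mem measurableSet_Ioi] with z hz
    have hz' : A < z := hz
    have h1 : 0 ≤ (t - c/2)*(z-A)^2 := mul_nonneg hα (sq_nonneg _)
    have h2 : 0 ≤ (t*(A-c))*(z-A) := mul_nonneg hs (by linarith)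
    have := (Real.exp_pos (-(z - c) ^ 2 / 2)).le
    have h3 : 0 ≤ ((t - c/2)*(z-A)^2 + (t*(A-c))*(z-A) + (A - t)) := by linarith
    exact mul_nonneg h3 this





theorem gTilde_pos (A x : ℝ) (hA : 0 < A) (hx0 : 0 ≤ x) (hxA : x ≤ A) :
    0 < ∫ z in Set.Ioi A,
      Real.exp (-(z^2 + x^2)/2) * besselI0 (z * x) * (1 - (z - A)^2/2) * z := by
  have hπ : 0 < Real.pi := Real.pi_pos
  set F : ℝ → ℝ → ℝ := fun z φ =>
    (1/Real.pi) * (Real.exp (-(z^2 + x^2)/2 + z*x*Real.cos φ) * ((1 - (z - A)^2/2) * z)) with hF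
  have step1 : ∀ z : ℝ, Real.exp (-(z^2 + x^2)/2) * besselI0 (z * x) * (1 - (z - A)^2/2) * z
      = ∫ φ in Set.Ioc 0 Real.pi, F z φ := by
    intro z
    have hb : besselI0 (z*x) = (1/Real.pi) * ∫ φ in Set.Ioc (0:ℝ) Real.pi,
        Real.exp (z*x*Real.cos φ) := by
      rw [besselI0, intervalIntegral.integral_of_le hπ.le]
    rw [hb]
    have h2 : Real.exp (-(z^2+x^2)/2) * ((1/Real.pi) * ∫ φ in Set.Ioc (0:ℝ) Real.pi,
          Real.exp (z*x*Real.cos φ)) * (1 - (z-A)^2/2) * z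
        = (Real.exp (-(z^2+x^2)/2) * (1 - (z-A)^2/2) * z * (1/Real.pi))
          * ∫ φ in Set.Ioc (0:ℝ) Real.pi, Real.exp (z*x*Real.cos φ) := by ring
    rw [h2, ← MeasureTheory.integral_const_mul]
    refine integral_congr_ae (Filter.Eventually.of_forall fun φ => ?_)
    simp only [hF]
    rw [Real.exp_add]
    ring
  have hrw : (∫ z in Set.Ioi A,
        Real.exp (-(z^2 + x^2)/2) * besselI0 (z * x) * (1 - (z - A)^2/2) * z)
      = ∫ z in Set.Ioi A, ∫ φ in Set.Ioc 0 Real.pi, F z φ :=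
    integral_congr_ae (Filter.Eventually.of_forall step1)
  rw [hrw]
  -- product integrability
  have hcont : Continuous (Function.uncurry F) := by
    simp only [hF, Function.uncurry]
    fun_prop
  have hIbound : Integrable (fun z : ℝ =>
      (1/Real.pi) * (Real.exp (-(z - x)^2/2) * ((1 + (z - A)^2/2) * z))) := by
    refine (integrable_cubic_gauss x 0 ((1 + A^2/2)/Real.pi) (-(A/Real.pi)) (1/(2*Real.pi))).congr
      (Filter.Eventually.of_forall fun z => ?_)
    field_simp
    ring
  have hInt : Integrable (Function.uncurry F)
      ((volume.restrict (Set.Ioi A)).prod (volume.restrict (Set.Ioc 0 Real.pi))) := by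
    have h1 : Integrable (fun p : ℝ × ℝ =>
        ((1/Real.pi) * (Real.exp (-(p.1 - x)^2/2) * ((1 + (p.1 - A)^2/2) * p.1))) * (1:ℝ))
        ((volume.restrict (Set.Ioi A)).prod (volume.restrict (Set.Ioc 0 Real.pi))) := by
      refine Integrable.mul_prod (f := fun z : ℝ =>
        (1/Real.pi) * (Real.exp (-(z - x)^2/2) * ((1 + (z - A)^2/2) * z)))
        (g := fun _ : ℝ => (1:ℝ)) hIbound.restrict ?_
      refine (integrableOn_const_iff).2 (Or.inr ?_)
      exact measure_Ioc_lt_top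
    refine Integrable.mono' h1 hcont.aestronglyMeasurable ?_
    rw [Measure.prod_restrict]
    filter_upwards [ae_restrict_mem (measurableSet_Ioi.prod measurableSet_Ioc)] with p hp
    obtain ⟨hp1, _⟩ := hp
    have hz0 : 0 < p.1 := lt_of_le_of_lt (by linarith : (0:ℝ) ≤ A) hp1
    have e1 : Real.exp (-(p.1^2+x^2)/2 + p.1*x*Real.cos p.2) ≤ Real.exp (-(p.1 - x)^2/2) := by
      apply Real.exp_le_exp.2
      have hcos : p.1*x*Real.cos p.2 ≤ p.1*x := by
        have := mul_le_of_le_one_right (mul_nonneg hz0.le hx0) (Real.cos_le_one p.2)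
        linarith
      nlinarith [sq_nonneg (p.1 - x)]
    have e2 : |(1 - (p.1-A)^2/2) * p.1| ≤ (1 + (p.1 - A)^2/2) * p.1 := by
      rw [abs_mul, abs_of_pos hz0]
      refine mul_le_mul_of_nonneg_right ?_ hz0.le
      rw [abs_le]
      constructor <;> nlinarith [sq_nonneg (p.1 - A)]
    have hFval : ‖Function.uncurry F p‖
        = (1/Real.pi) * (Real.exp (-(p.1^2+x^2)/2 + p.1*x*Real.cos p.2)
          * |(1 - (p.1-A)^2/2) * p.1|) := by
      simp only [hF, Function.uncurry, Real.norm_eq_abs, abs_mul]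
      rw [abs_of_pos (by positivity : (0:ℝ) < 1/Real.pi), abs_of_pos (Real.exp_pos _)]
    rw [hFval, mul_one]
    refine mul_le_mul_of_nonneg_left ?_ (by positivity)
    exact mul_le_mul e1 e2 (abs_nonneg _) (Real.exp_pos _).le
  rw [MeasureTheory.integral_integral_swap hInt]
  have hG : ∀ φ : ℝ, 0 < ∫ z in Set.Ioi A, F z φ := by
    intro φ
    have hcle : x * Real.cos φ ≤ A := by
      have := mul_le_of_le_one_right hx0 (Real.cos_le_one φ)
      linarith
    have hk := key_gauss_pos A (x * Real.cos φ) hA hcle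
    have hpt : ∀ z : ℝ, F z φ = ((1/Real.pi) * Real.exp (((x*Real.cos φ)^2 - x^2)/2))
        * (Real.exp (-(z - x*Real.cos φ) ^ 2 / 2) * ((1 - (z - A) ^ 2 / 2) * z)) := by
      intro z
      simp only [hF]
      rw [show (-(z^2+x^2)/2 + z*x*Real.cos φ)
          = ((x*Real.cos φ)^2 - x^2)/2 + (-(z - x*Real.cos φ) ^ 2 / 2) from by ring, Real.exp_add]
      ring
    rw [integral_congr_ae (Filter.Eventually.of_forall hpt), MeasureTheory.integral_const_mul]
    have h9 : 0 < (1/Real.pi) * Real.exp (((x*Real.cos φ)^2 - x^2)/2) := by positivity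
    exact mul_pos h9 hk
  have hGint : IntegrableOn (fun φ => ∫ z in Set.Ioi A, F z φ) (Set.Ioc 0 Real.pi) :=
    hInt.integral_prod_right
  rw [setIntegral_pos_iff_support_of_nonneg_ae
    (Filter.Eventually.of_forall fun φ => (hG φ).le) hGint]
  have hsub : Set.Ioc 0 Real.pi
      ⊆ (Function.support fun φ => ∫ z in Set.Ioi A, F z φ) ∩ Set.Ioc 0 Real.pi :=
    fun φ hφ => ⟨Function.mem_support.2 (hG φ).ne', hφ⟩
  calc (0:ENNReal) < volume (Set.Ioc 0 Real.pi) := by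
        rw [Real.volume_Ioc]
        simpa using ENNReal.ofReal_pos.2 (by linarith)
    _ ≤ _ := measure_mono hsub
end

section
/- For n ≥ 1 and A > 0, the normalizing constant k_n(A) = (2 / (2^{n/2} Γ(n/2))) ∫_A^∞ e^{-(r−A)²/2} r^{n−1} dr equals the finite sum Σ_{i=0}^{n−1} C(n−1, i) · Γ((n−i)/2) / (2^{i/2} Γ(n/2)) · A^i. -/
open MeasureTheory Real Finset

lemma gauss_moment (k : ℕ) :
    ∫ x in Set.Ioi (0:ℝ), Real.exp (-x^2/2) * x^k
      = 2^(((k:ℝ)+1)/2 - 1) * Real.Gamma (((k:ℝ)+1)/2) := by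
  have h := integral_rpow_mul_exp_neg_mul_rpow (p := (2:ℝ)) (q := (k:ℝ)) (b := (1/2:ℝ))
    (by norm_num) (lt_of_lt_of_le neg_one_lt_zero (Nat.cast_nonneg k)) (by norm_num)
  have heq : ∫ x in Set.Ioi (0:ℝ), Real.exp (-x^2/2) * x^k
      = ∫ x in Set.Ioi (0:ℝ), x ^ (k:ℝ) * Real.exp (-(1/2) * x ^ (2:ℝ)) := by
    refine setIntegral_congr_fun measurableSet_Ioi (fun x hx => ?_)
    rw [Real.rpow_natCast, Real.rpow_two]
    ring_nf
  rw [heq, h]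
  rw [show (1/2:ℝ) = 2^(-1:ℝ) by rw [Real.rpow_neg_one]; norm_num]
  rw [← Real.rpow_mul (by norm_num : (0:ℝ) ≤ 2), ← Real.rpow_add (by norm_num : (0:ℝ) < 2)]
  congr 1
  ring

lemma gauss_igr (k : ℕ) :
    IntegrableOn (fun x : ℝ => Real.exp (-x^2/2) * x^k) (Set.Ioi 0) := by
  have h := integrableOn_rpow_mul_exp_neg_mul_sq (b := (1/2:ℝ)) (by norm_num)
    (s := (k:ℝ)) (lt_of_lt_of_le neg_one_lt_zero (Nat.cast_nonneg k))
  refine h.congr_fun (fun x hx => ?_) measurableSet_Ioi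
  beta_reduce
  rw [Real.rpow_natCast]
  ring_nf

theorem kn_formula (n : ℕ) (hn : 1 ≤ n) (A : ℝ) (hA : 0 < A) :
    (2 / (2^((n : ℝ)/2) * Real.Gamma ((n : ℝ)/2))) *
      ∫ r in Set.Ioi A, Real.exp (-(r - A)^2/2) * r^(n - 1) =
    ∑ i ∈ Finset.range n,
      ((n - 1).choose i : ℝ) * Real.Gamma (((n : ℝ) - (i : ℝ))/2)
        / (2^((i : ℝ)/2) * Real.Gamma ((n : ℝ)/2)) * A^i := by
  set m := n - 1 with hm
  have hmn : m + 1 = n := Nat.succ_pred_eq_of_pos hn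
  -- translate
  have htrans : ∫ r in Set.Ioi A, Real.exp (-(r - A)^2/2) * r^m
      = ∫ x in Set.Ioi (0:ℝ), Real.exp (-x^2/2) * (A+x)^m := by
    have := (measurePreserving_add_right (volume : Measure ℝ) A).setIntegral_preimage_emb
      (measurableEmbedding_addRight A)
      (fun r => Real.exp (-(r - A)^2/2) * r^m) (Set.Ioi A)
    rw [← this]
    simp only [Set.preimage_add_const_Ioi, sub_self, add_sub_cancel_right]
    refine setIntegral_congr_fun measurableSet_Ioi (fun x hx => ?_)
    rw [add_comm]
  -- binomial expansion
  have hexp : ∫ x in Set.Ioi (0:ℝ), Real.exp (-x^2/2) * (A+x)^m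
      = ∑ i ∈ Finset.range n, (m.choose i : ℝ) * A^i *
          ∫ x in Set.Ioi (0:ℝ), Real.exp (-x^2/2) * x^(m-i) := by
    rw [← hmn]
    have : ∀ x : ℝ, Real.exp (-x^2/2) * (A+x)^m
        = ∑ i ∈ Finset.range (m+1), (m.choose i : ℝ) * A^i * (Real.exp (-x^2/2) * x^(m-i)) := by
      intro x
      rw [add_pow, Finset.mul_sum]
      refine Finset.sum_congr rfl (fun i hi => ?_)
      push_cast
      ring
    simp_rw [this]
    rw [integral_finset_sum _ (fun i _ => ((gauss_igr (m-i)).const_mul _))]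
    refine Finset.sum_congr rfl (fun i hi => ?_)
    rw [integral_const_mul]
  rw [htrans, hexp, Finset.mul_sum]
  refine Finset.sum_congr rfl (fun i hi => ?_)
  rw [gauss_moment]
  have hi' : i < n := Finset.mem_range.mp hi
  have hcast : ((m - i : ℕ) : ℝ) + 1 = (n : ℝ) - (i : ℝ) := by
    have : m - i + 1 + i = n := by omega
    push_cast [← this]
    ring
  rw [hcast]
  have hG : Real.Gamma ((n:ℝ)/2) ≠ 0 :=
    (Real.Gamma_pos_of_pos (by positivity)).ne'
  have h2 : (2:ℝ)^(((n:ℝ)-(i:ℝ))/2 - 1) * 2^((i:ℝ)/2) * 2 = 2^((n:ℝ)/2) := by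
    have : (2:ℝ)^(((n:ℝ)-(i:ℝ))/2 - 1) * 2^((i:ℝ)/2) * 2^(1:ℝ) = 2^((n:ℝ)/2) := by
      rw [← Real.rpow_add two_pos, ← Real.rpow_add two_pos]
      congr 1
      ring
    simpa using this
  have hp1 : (0:ℝ) < 2^((n:ℝ)/2) := Real.rpow_pos_of_pos two_pos _
  have hp2 : (0:ℝ) < 2^((i:ℝ)/2) := Real.rpow_pos_of_pos two_pos _
  field_simp
  rw [← h2]
  ring
end

section
/- For integers n ≥ 2, nonnegative integer k, and A > 0, ∫_A^∞ (z^{2k+2}/(n+2k) − z^{2k}) · ((z−A)²/2) · z^{n−1} e^{-z²/2} dz ≥ 0. -/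
open MeasureTheory Real

private lemma gauss_integrableOn (j : ℕ) {A : ℝ} (hA : 0 < A) :
    IntegrableOn (fun x : ℝ => x ^ j * Real.exp (-x ^ 2 / 2)) (Set.Ioi A) := by
  have h := integrableOn_rpow_mul_exp_neg_mul_sq (b := 1/2) (by norm_num)
    (s := (j : ℝ)) (lt_of_lt_of_le neg_one_lt_zero (Nat.cast_nonneg j))
  have h2 := h.mono_set (Set.Ioi_subset_Ioi hA.le)
  refine h2.congr_fun (fun x hx => ?_) measurableSet_Ioi
  have hx0 : (0 : ℝ) < x := hA.trans hx
  simp only [Real.rpow_natCast]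
  ring_nf

private lemma gauss_tendsto (j : ℕ) :
    Filter.Tendsto (fun x : ℝ => x ^ j * Real.exp (-x ^ 2 / 2)) Filter.atTop (nhds 0) := by
  have h := (tendsto_rpow_abs_mul_exp_neg_mul_sq_cocompact (a := 1/2) (by norm_num)
    (j : ℝ)).mono_left _root_.atTop_le_cocompact
  apply h.congr'
  filter_upwards [Filter.eventually_ge_atTop (0 : ℝ)] with x hx
  rw [abs_of_nonneg hx, Real.rpow_natCast]
  ring_nf

theorem integral_weighted_nonneg (n : ℕ) (hn : 2 ≤ n) (k : ℕ) (A : ℝ) (hA : 0 < A) :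
    0 ≤ ∫ z in Set.Ioi A,
      (z^(2*k + 2) / (n + 2*k) - z^(2*k)) * ((z - A)^2 / 2) * z^(n - 1)
        * Real.exp (-z^2/2) := by
  obtain ⟨p, rfl⟩ : ∃ p, n = p + 2 := ⟨n - 2, by omega⟩
  set c : ℝ := (p : ℝ) + 2 + 2 * k with hc_def
  have hc : 0 < c := by positivity
  have hcast : ((p + 2 : ℕ) : ℝ) + 2 * (k : ℝ) = c := by push_cast [hc_def]; ring
  set L : ℕ := p + 1 + 2 * k with hL
  -- auxiliary functions
  set e : ℝ → ℝ := fun z => Real.exp (-z ^ 2 / 2) with he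
  set f : ℝ → ℝ := fun z => -(1/c) * (z ^ (L + 1) * e z * ((z - A) ^ 2 / 2)) with hf
  set f' : ℝ → ℝ := fun z =>
    -(1/c) * ((c * z ^ L - z ^ (L + 2)) * e z * ((z - A) ^ 2 / 2)
      + z ^ (L + 1) * e z * (z - A)) with hf'
  set h : ℝ → ℝ := fun z => (1/c) * (z ^ (L + 1) * e z * (z - A)) with hh
  -- derivative of e
  have he' : ∀ z : ℝ, HasDerivAt e (e z * (-z)) z := by
    intro z
    have h1 : HasDerivAt (fun z : ℝ => -z ^ 2 / 2) (-z) z := by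
      have := ((hasDerivAt_pow 2 z).neg).div_const 2
      refine this.congr_deriv ?_
      push_cast
      ring
    simpa using h1.exp
  have hderiv : ∀ z : ℝ, HasDerivAt f (f' z) z := by
    intro z
    have hg : HasDerivAt (fun z : ℝ => z ^ (L + 1) * e z)
        ((c * z ^ L - z ^ (L + 2)) * e z) z := by
      have := (hasDerivAt_pow (L + 1) z).mul (he' z)
      refine this.congr_deriv ?_
      have : ((L : ℝ) + 1) = c := by
        rw [hL, hc_def]; push_cast; ring
      rw [Nat.add_sub_cancel]
      push_cast
      rw [hL, hc_def]
      push_cast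
      ring
    have hq : HasDerivAt (fun z : ℝ => (z - A) ^ 2 / 2) (z - A) z := by
      have := (((hasDerivAt_id z).sub_const A).pow 2).div_const 2
      refine this.congr_deriv ?_
      simp [id_eq]
    have := (hg.mul hq).const_mul (-(1/c))
    exact this
  -- integrability of monomial * gaussian pieces
  have base : ∀ j : ℕ, IntegrableOn (fun z : ℝ => z ^ j * e z) (Set.Ioi A) :=
    fun j => gauss_integrableOn j hA
  have hint_f' : IntegrableOn f' (Set.Ioi A) := by
    have hG : IntegrableOn (fun z : ℝ =>
        -(1/c) * ((-(1/2)) * (z ^ (L + 4) * e z) + A * (z ^ (L + 3) * e z)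
          + (c/2 - A^2/2 + 1) * (z ^ (L + 2) * e z)
          + (-(c + 1) * A) * (z ^ (L + 1) * e z)
          + (c * A^2 / 2) * (z ^ L * e z))) (Set.Ioi A) := by
      have t1 := (base (L+4)).const_mul (-(1/2) : ℝ)
      have t2 := (base (L+3)).const_mul A
      have t3 := (base (L+2)).const_mul (c/2 - A^2/2 + 1)
      have t4 := (base (L+1)).const_mul (-(c + 1) * A)
      have t5 := (base L).const_mul (c * A^2 / 2)
      exact ((((t1.add t2).add t3).add t4).add t5).const_mul (-(1/c))
    refine hG.congr_fun (fun z _ => ?_) measurableSet_Ioi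
    simp only [hf']
    ring
  have hint_h : IntegrableOn h (Set.Ioi A) := by
    have hG : IntegrableOn (fun z : ℝ =>
        (1/c) * ((z ^ (L + 2) * e z) + (-A) * (z ^ (L + 1) * e z))) (Set.Ioi A) :=
      ((base (L+2)).add ((base (L+1)).const_mul _)).const_mul _
    refine hG.congr_fun (fun z _ => ?_) measurableSet_Ioi
    simp only [hh]
    ring
  -- limit of f at infinity
  have htendsto : Filter.Tendsto f Filter.atTop (nhds 0) := by
    have h1 := (((gauss_tendsto (L + 3)).const_mul (1/2 : ℝ)).add
      ((gauss_tendsto (L + 2)).const_mul (-A))).add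
      ((gauss_tendsto (L + 1)).const_mul (A^2/2))
    simp only [mul_zero, add_zero] at h1
    have h2 := h1.const_mul (-(1/c))
    rw [mul_zero] at h2
    apply h2.congr
    intro z
    simp only [hf, he]
    ring
  -- FTC on (A, ∞)
  have hFTC : ∫ z in Set.Ioi A, f' z = 0 - f A :=
    integral_Ioi_of_hasDerivAt_of_tendsto
      (hderiv A).continuousAt.continuousWithinAt
      (fun z _ => hderiv z) hint_f' htendsto
  have hfA : f A = 0 := by simp [hf]
  -- rewrite the integrand
  have hkey : (fun z : ℝ =>
      (z^(2*k + 2) / (((p + 2 : ℕ) : ℝ) + 2*(k : ℝ)) - z^(2*k)) * ((z - A)^2 / 2)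
        * z^(p + 2 - 1) * Real.exp (-z^2/2)) = fun z => f' z + h z := by
    funext z
    rw [hcast]
    simp only [hf', hh, he, hL, show p + 2 - 1 = p + 1 from rfl]
    field_simp
    ring
  rw [show (∫ z in Set.Ioi A,
      (z^(2*k + 2) / (((p + 2 : ℕ) : ℝ) + 2*(k : ℝ)) - z^(2*k)) * ((z - A)^2 / 2)
        * z^(p + 2 - 1) * Real.exp (-z^2/2)) = ∫ z in Set.Ioi A, (f' z + h z) by rw [hkey]]
  rw [integral_add hint_f' hint_h, hFTC, hfA]
  have hh_nonneg : 0 ≤ ∫ z in Set.Ioi A, h z := by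
    apply setIntegral_nonneg measurableSet_Ioi
    intro z hz
    have hz0 : (0 : ℝ) < z := hA.trans hz
    have hzA : 0 ≤ z - A := by simp at hz; linarith
    simp only [hh, he]
    positivity
  linarith
end
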